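/- Let (Y,d) be a metric space, V ⊆ Y an open set, δ > 0, and for t > 0 put K_t = { y ∈ Y : dist(y, Y∖V) > t } (with the convention that the distance from a point to the empty set is +∞, so K_t = Y when V = Y). Let ū : Y → ℝ be 1-Lipschitz with |ū(y)| ≤ δ for all y ∈ V. Then there exists a 1-Lipschitz function ū₁ : Y → ℝ such that ū₁ = ū on K_{2δ}, ū₁ = 0 on Y∖K_δ, and dist(spt ū₁, Y∖V) ≥ δ, where spt ū₁ is the closure of { y : ū₁(y) ≠ 0 }. -/

import Mathlib

open MeasureTheory Set
open scoped ENNReal Topology NNReal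

noncomputable section

/-- distance between two sets, `+∞` when one is empty. -/
def eSetDist {Y : Type*} [PseudoEMetricSpace Y] (A B : Set Y) : ℝ≥0∞ :=
  ⨅ y ∈ A, ⨅ z ∈ B, edist y z

/-- cutoff of a refinement. A `1`-Lipschitz `ū` with `|ū| ≤ δ` on the open
set `V` admits a `1`-Lipschitz modification `ū₁` equal to `ū` on `K_{2δ}`, vanishing outside
`K_δ`, and supported at distance at least `δ` from `Y∖V`; here
`K_t = {y : dist(y,Y∖V) > t}`. -/
theorem lipschitz_cutoff_exists
    {Y : Type*} [MetricSpace Y] (V : Set Y) (hV : IsOpen V) (δ : ℝ) (hδ : 0 < δ)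
    (u : Y → ℝ) (hu : LipschitzWith 1 u) (hle : ∀ y ∈ V, |u y| ≤ δ) :
    ∃ u₁ : Y → ℝ, LipschitzWith 1 u₁ ∧
      (∀ y, ENNReal.ofReal (2 * δ) < EMetric.infEdist y Vᶜ → u₁ y = u y) ∧
      (∀ y, ¬ ENNReal.ofReal δ < EMetric.infEdist y Vᶜ → u₁ y = 0) ∧
      ENNReal.ofReal δ ≤ eSetDist (tsupport u₁) Vᶜ := by
  rcases eq_empty_or_nonempty Vᶜ with hc | hc
  · refine ⟨u, hu, fun y _ => rfl, ?_, ?_⟩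
    · intro y hy
      exact absurd (by
        rw [hc]; show ENNReal.ofReal δ < Metric.infEDist y ∅
        rw [EMetric.infEdist_empty (x := y)]; exact ENNReal.ofReal_lt_top) hy
    · refine le_iInf₂ fun y hy => le_iInf₂ fun z hz => ?_
      rw [hc] at hz; exact absurd hz (notMem_empty z)
  -- main case: Vᶜ nonempty
  have hEfin : ∀ y : Y, EMetric.infEdist y Vᶜ ≠ ⊤ := fun y => Metric.infEdist_ne_top hc
  have hEeq : ∀ y : Y, EMetric.infEdist y Vᶜ = ENNReal.ofReal (Metric.infDist y Vᶜ) := by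
    intro y
    rw [Metric.infDist]; exact (ENNReal.ofReal_toReal (hEfin y)).symm
  set ψ : Y → ℝ := fun y => max (Metric.infDist y Vᶜ - δ) 0 with hψ
  have hψ0 : ∀ y, 0 ≤ ψ y := fun y => le_max_right _ _
  have hψlip : LipschitzWith 1 ψ := by
    have h1 : LipschitzWith 1 fun y => Metric.infDist y Vᶜ - δ := by
      intro x y
      simpa [edist_dist, Real.dist_eq, sub_sub_sub_cancel_right] using
        Metric.lipschitz_infDist_pt Vᶜ x y
    exact h1.max_const 0
  set u₁ : Y → ℝ := fun y => max (-(ψ y)) (min (ψ y) (u y)) with hu₁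
  have hlip : LipschitzWith 1 u₁ := by
    simpa using hψlip.neg.max (hψlip.min hu)
  refine ⟨u₁, hlip, ?_, ?_, ?_⟩
  · intro y hy
    rw [hEeq y, ENNReal.ofReal_lt_ofReal_iff_of_nonneg (by positivity)] at hy
    have hyV : y ∈ V := by
      by_contra h
      have : Metric.infDist y Vᶜ = 0 := Metric.infDist_zero_of_mem h
      linarith
    have habs := hle y hyV
    have h1 : |u y| < ψ y := by
      have : δ < ψ y := lt_max_of_lt_left (by linarith)
      linarith [abs_nonneg (u y)]
    have h2 : u y ≤ ψ y := (le_abs_self _).trans h1.le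
    have h3 : -(ψ y) ≤ u y := by
      have := neg_abs_le (u y); linarith [abs_lt.mp h1]
    simp [hu₁, min_eq_right h2, max_eq_right h3]
  · intro y hy
    rw [hEeq y, ENNReal.ofReal_lt_ofReal_iff_of_nonneg hδ.le, not_lt] at hy
    have hψy : ψ y = 0 := max_eq_right (by linarith)
    show max (-(ψ y)) (min (ψ y) (u y)) = 0
    rw [hψy, neg_zero]
    exact max_eq_left (min_le_left _ _)
  · -- support estimate
    have hsub : tsupport u₁ ⊆ {y | δ ≤ Metric.infDist y Vᶜ} := by
      have hclosed : IsClosed {y | δ ≤ Metric.infDist y Vᶜ} :=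
        isClosed_le continuous_const ((Metric.lipschitz_infDist_pt Vᶜ).continuous)
      apply closure_minimal _ hclosed
      intro y hy
      by_contra h
      simp only [mem_setOf_eq, not_le] at h
      have hψy : ψ y = 0 := max_eq_right (by linarith)
      apply hy
      show max (-(ψ y)) (min (ψ y) (u y)) = 0
      rw [hψy, neg_zero]
      exact max_eq_left (min_le_left _ _)
    refine le_iInf₂ fun y hy => le_iInf₂ fun z hz => ?_
    have h1 : ENNReal.ofReal δ ≤ EMetric.infEdist y Vᶜ := by
      rw [hEeq y]; exact ENNReal.ofReal_le_ofReal (hsub hy)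
    exact h1.trans (EMetric.infEdist_le_edist_of_mem hz)
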